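/- arXiv:1704.05770 — 2 statements merged into one kernel-verified Lean document; each statement's English description precedes it below -/
import Mathlib

section
/- For every n : ℕ, the quotient map p : Sⁿ → ℝPⁿ is a covering map. (The fiber sequence S⁰ ↪ Sⁿ ↠ ℝPⁿ: the total space of the tautological double cover of ℝPⁿ is the n-sphere.) -/
/-- The `n`-sphere, the unit sphere in `(n+1)`-dimensional Euclidean space. -/
abbrev Sph (n : ℕ) : Type :=
  Metric.sphere (0 : EuclideanSpace ℝ (Fin (n + 1))) 1

/-- The relation identifying `x` with `-x` on the `n`-sphere. -/
def antipodalRel (n : ℕ) (x y : Sph n) : Prop :=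
  (y : EuclideanSpace ℝ (Fin (n + 1))) = -(x : EuclideanSpace ℝ (Fin (n + 1)))

/-- Real projective `n`-space, the antipodal quotient of the `n`-sphere with the
quotient topology. -/
abbrev RP (n : ℕ) : Type := Quot (antipodalRel n)

/-- The quotient map `Sⁿ → ℝPⁿ`. -/
def proj (n : ℕ) : Sph n → RP n := Quot.mk (antipodalRel n)

open Set

namespace AntipodalCover

variable {n : ℕ}

local notation "𝔼" => EuclideanSpace ℝ (Fin (n + 1))

instance : Nonempty (Sph n) :=
  ((NormedSpace.sphere_nonempty (x := (0 : EuclideanSpace ℝ (Fin (n+1))))).mpr zero_le_one).to_subtype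

lemma proj_eq_iff (y z : Sph n) :
    proj n y = proj n z ↔ (z : 𝔼) = (y : 𝔼) ∨ (z : 𝔼) = -(y : 𝔼) := by
  constructor
  · intro h
    have inv : ∀ a b : Sph n, antipodalRel n a b →
        (((a : 𝔼) = y ∨ (a : 𝔼) = -(y : 𝔼)) = ((b : 𝔼) = y ∨ (b : 𝔼) = -(y : 𝔼))) := by
      intro a b hab
      rw [hab]
      apply propext
      constructor
      · rintro (h1 | h1) <;> simp [h1]
      · rintro (h1 | h1)
        · right; rw [← neg_neg (a : 𝔼), h1]
        · left; rw [← neg_neg (a : 𝔼), h1, neg_neg]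
    have := congrArg (Quot.lift (fun w : Sph n => ((w : 𝔼) = y ∨ (w : 𝔼) = -(y : 𝔼))) inv) h
    simp only [proj] at this
    rw [← this]
    left; trivial
  · rintro (h | h)
    · exact congrArg _ (Subtype.ext h.symm)
    · exact Quot.sound (r := antipodalRel n) (a := y) (b := z) h

lemma continuous_proj : Continuous (proj n) := continuous_quot_mk

lemma isOpenMap_proj : IsOpenMap (proj n) := by
  intro V hV
  refine (isOpen_coinduced (f := proj n)).mpr ?_
  have : proj n ⁻¹' (proj n '' V) = V ∪ ((fun y : Sph n => -y) ⁻¹' V) := by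
    ext y
    simp only [mem_preimage, mem_image, mem_union]
    constructor
    · rintro ⟨v, hv, hpv⟩
      rcases (proj_eq_iff v y).mp hpv with h | h
      · left; rwa [Subtype.ext h]
      · right
        show -y ∈ V
        have : (-y : Sph n) = v := by
          apply Subtype.ext
          simp [h]
        rwa [this]
    · rintro (h | h)
      · exact ⟨y, h, rfl⟩
      · refine ⟨-y, h, ?_⟩
        rw [proj_eq_iff]
        right; simp
  rw [this]
  exact hV.union ((hV.preimage (by continuity)))

/-- inner product with a fixed point -/
noncomputable def g (x₀ : Sph n) (y : Sph n) : ℝ := inner (𝕜 := ℝ) (x₀ : 𝔼) (y : 𝔼)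

lemma continuous_g (x₀ : Sph n) : Continuous (g x₀) :=
  (Continuous.inner continuous_const continuous_subtype_val)

lemma g_neg (x₀ y : Sph n) : g x₀ (-y) = -g x₀ y := by
  simp [g, inner_neg_right]

lemma g_self (x₀ : Sph n) : g x₀ x₀ = 1 := by
  have hx : ‖(x₀ : 𝔼)‖ = 1 := by simpa using mem_sphere_iff_norm.mp x₀.2
  rw [g, real_inner_self_eq_norm_sq, hx]; norm_num

/-- the trivializing map -/
noncomputable def T (x₀ : Sph n) (y : Sph n) : RP n × Bool :=
  (proj n y, if 0 < g x₀ y then true else false)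

noncomputable def srcSet (x₀ : Sph n) : Set (Sph n) := {y | g x₀ y ≠ 0}

lemma isOpen_srcSet (x₀ : Sph n) : IsOpen (srcSet x₀) :=
  isOpen_ne.preimage (continuous_g x₀) |>.mono le_rfl

lemma injOn_T (x₀ : Sph n) : InjOn (T x₀) (srcSet x₀) := by
  intro y hy z hz h
  have h1 : proj n y = proj n z := congrArg Prod.fst h
  have h2 : (if 0 < g x₀ y then true else false) = (if 0 < g x₀ z then true else false) :=
    congrArg Prod.snd h
  rcases (proj_eq_iff y z).mp h1 with hzy | hzy
  · exact (Subtype.ext hzy).symm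
  · exfalso
    have hz' : (z : Sph n) = -y := Subtype.ext (by simp [hzy])
    have : g x₀ z = -g x₀ y := by rw [hz', g_neg]
    rcases lt_or_gt_of_ne hy with hgy | hgy
    · rw [this] at h2
      simp [hgy, not_lt.mpr (le_of_lt hgy), neg_pos] at h2
    · rw [this] at h2
      simp [hgy, not_lt.mpr (le_of_lt (neg_neg_of_pos hgy) : -g x₀ y ≤ 0)] at h2


lemma continuousOn_T (x₀ : Sph n) : ContinuousOn (T x₀) (srcSet x₀) := by
  apply ContinuousOn.prodMk (continuous_proj.continuousOn)
  intro y hy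
  apply ContinuousAt.continuousWithinAt
  rcases lt_or_gt_of_ne (hy : g x₀ y ≠ 0) with hgy | hgy
  · have hev : (fun z => if 0 < g x₀ z then true else false) =ᶠ[nhds y] (fun _ => false) := by
      filter_upwards [(isOpen_lt (continuous_g x₀) continuous_const).mem_nhds hgy] with z hz
      simp [not_lt.mpr (le_of_lt hz)]
    exact (continuousAt_congr hev).mpr continuousAt_const
  · have hev : (fun z => if 0 < g x₀ z then true else false) =ᶠ[nhds y] (fun _ => true) := by
      filter_upwards [(isOpen_lt continuous_const (continuous_g x₀)).mem_nhds hgy] with z hz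
      simp [hz]
    exact (continuousAt_congr hev).mpr continuousAt_const

lemma image_T (x₀ : Sph n) (A : Set (Sph n)) (hA : A ⊆ srcSet x₀) :
    T x₀ '' A = (proj n '' (A ∩ {y | 0 < g x₀ y})) ×ˢ ({true} : Set Bool)
      ∪ (proj n '' (A ∩ {y | g x₀ y < 0})) ×ˢ ({false} : Set Bool) := by
  ext ⟨q, b⟩
  simp only [mem_image, mem_union, mem_prod, mem_singleton_iff, mem_inter_iff, mem_setOf_eq]
  constructor
  · rintro ⟨y, hyA, hy⟩
    rcases lt_or_gt_of_ne (hA hyA : g x₀ y ≠ 0) with hgy | hgy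
    · right
      refine ⟨⟨y, ⟨hyA, hgy⟩, ?_⟩, ?_⟩
      · exact congrArg Prod.fst hy
      · have h2 := congrArg Prod.snd hy
        simp only [T, not_lt.mpr (le_of_lt hgy), if_false] at h2
        exact h2.symm
    · left
      refine ⟨⟨y, ⟨hyA, hgy⟩, ?_⟩, ?_⟩
      · exact congrArg Prod.fst hy
      · have h2 := congrArg Prod.snd hy
        simp only [T, if_pos hgy] at h2
        exact h2.symm
  · rintro (⟨⟨y, ⟨hyA, hgy⟩, hq⟩, hb⟩ | ⟨⟨y, ⟨hyA, hgy⟩, hq⟩, hb⟩)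
    · exact ⟨y, hyA, by simp [T, hq, hgy, hb]⟩
    · exact ⟨y, hyA, by simp [T, hq, not_lt.mpr (le_of_lt hgy), hb]⟩

lemma isOpenMap_restrict_T (x₀ : Sph n) : IsOpenMap ((srcSet x₀).restrict (T x₀)) := by
  intro W hW
  obtain ⟨V, hV, rfl⟩ := isOpen_induced_iff.mp hW
  have himg : (srcSet x₀).restrict (T x₀) '' (Subtype.val ⁻¹' V) = T x₀ '' (V ∩ srcSet x₀) := by
    ext q
    simp only [restrict, mem_image, mem_preimage, mem_inter_iff]
    constructor
    · rintro ⟨⟨y, hys⟩, hyV, rfl⟩; exact ⟨y, ⟨hyV, hys⟩, rfl⟩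
    · rintro ⟨y, ⟨hyV, hys⟩, rfl⟩; exact ⟨⟨y, hys⟩, hyV, rfl⟩
  rw [himg, image_T x₀ _ inter_subset_right]
  apply IsOpen.union
  · exact ((isOpenMap_proj) _ (((hV.inter (isOpen_srcSet x₀))).inter
      (isOpen_lt continuous_const (continuous_g x₀)))).prod (isOpen_discrete _)
  · exact ((isOpenMap_proj) _ (((hV.inter (isOpen_srcSet x₀))).inter
      (isOpen_lt (continuous_g x₀) continuous_const))).prod (isOpen_discrete _)

lemma mem_proj_image_pos (x₀ y : Sph n) :
    proj n y ∈ proj n '' {z | 0 < g x₀ z} ↔ g x₀ y ≠ 0 := by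
  constructor
  · rintro ⟨v, hv, hpv⟩
    rcases (proj_eq_iff v y).mp hpv with h | h
    · rw [show y = v from Subtype.ext h]
      exact ne_of_gt hv
    · have : g x₀ y = -g x₀ v := by
        have : (y : Sph n) = -v := Subtype.ext (by simp [h])
        rw [this, g_neg]
      rw [this]
      simpa using ne_of_gt hv
  · intro hy
    rcases lt_or_gt_of_ne hy with h | h
    · refine ⟨-y, by simpa [g_neg] using h, ?_⟩
      exact Quot.sound (r := antipodalRel n) (a := -y) (b := y) (by simp [antipodalRel])
    · exact ⟨y, h, rfl⟩

noncomputable def triv (x₀ : Sph n) : Bundle.Trivialization Bool (proj n) where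
  toOpenPartialHomeomorph := OpenPartialHomeomorph.ofContinuousOpenRestrict
    ((injOn_T x₀).toPartialEquiv (T x₀) (srcSet x₀)) (continuousOn_T x₀)
    (isOpenMap_restrict_T x₀) (isOpen_srcSet x₀)
  baseSet := proj n '' {y | 0 < g x₀ y}
  open_baseSet := isOpenMap_proj _ (isOpen_lt continuous_const (continuous_g x₀))
  source_eq := by
    ext y
    show y ∈ srcSet x₀ ↔ _
    rw [mem_preimage, mem_proj_image_pos]
    rfl
  target_eq := by
    show T x₀ '' (srcSet x₀) = _
    ext ⟨q, b⟩
    rw [image_T x₀ _ le_rfl]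
    simp only [mem_union, mem_prod, mem_singleton_iff, mem_univ, and_true]
    constructor
    · rintro (⟨⟨y, ⟨_, hy⟩, rfl⟩, _⟩ | ⟨⟨y, ⟨_, hy⟩, rfl⟩, _⟩)
      · exact ⟨y, hy, rfl⟩
      · exact (mem_proj_image_pos x₀ y).mpr (ne_of_lt hy)
    · rintro ⟨y, hy, rfl⟩
      cases b
      · right
        refine ⟨⟨-y, ⟨?_, by simpa [g_neg] using hy⟩, ?_⟩, rfl⟩
        · show g x₀ (-y) ≠ 0
          simpa [g_neg] using ne_of_gt hy
        · exact (Quot.sound (r := antipodalRel n) (a := -y) (b := y) (by simp [antipodalRel]))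
      · exact Or.inl ⟨⟨y, ⟨ne_of_gt hy, hy⟩, rfl⟩, rfl⟩
  proj_toFun := fun y _ => rfl

lemma mem_baseSet_triv (x₀ : Sph n) : proj n x₀ ∈ (triv x₀).baseSet :=
  ⟨x₀, by simp [g_self], rfl⟩

end AntipodalCover


/-- The quotient map `Sⁿ → ℝPⁿ` is a covering map. -/
theorem stmt_7 (n : ℕ) : IsCoveringMap (proj n) := by
  apply IsCoveringMap.mk (proj n) (fun _ => Bool) (fun x => AntipodalCover.triv x.out)
  intro x
  have hx := AntipodalCover.mem_baseSet_triv (x.out : Sph n)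
  have hout : proj n (Quot.out x) = x := Quot.out_eq x
  rwa [hout] at hx
end

section
/- The infinite-dimensional sphere S^∞, i.e. the unit sphere of the real Hilbert space ℓ²(ℕ, ℝ), is a contractible topological space. (Brunerie's theorem that S^∞ = colim_n Sⁿ is contractible, in its topological form.) -/
noncomputable section

open Metric
open scoped ENNReal

local notation "E" => lp (fun _ : ℕ => ℝ) 2

/-- The shift of a sequence: prepend a zero. -/
def shiftFun (f : ℕ → ℝ) : ℕ → ℝ := fun n => Nat.casesOn n 0 f

lemma summable_shift {f : ℕ → ℝ} (hf : Summable fun n => ‖f n‖ ^ (2 : ℝ≥0∞).toReal) :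
    Summable fun n => ‖shiftFun f n‖ ^ (2 : ℝ≥0∞).toReal := by
  have : Summable fun n => ‖shiftFun f (n + 1)‖ ^ (2 : ℝ≥0∞).toReal := hf
  exact (summable_nat_add_iff 1).mp this

lemma memℓp_shift (f : E) : Memℓp (shiftFun f) 2 :=
  memℓp_gen (summable_shift ((lp.memℓp f).summable (by norm_num)))

/-- The shift as a linear isometry of `ℓ²`. -/
def shiftL : E →ₗᵢ[ℝ] E where
  toFun f := ⟨shiftFun f, memℓp_shift f⟩
  map_add' f g := by
    apply lp.ext
    funext n
    cases n <;> simp [shiftFun, lp.coeFn_add, Pi.add_apply] <;> erw [PreLp.add_apply] <;> simp [shiftFun]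
  map_smul' c f := by
    apply lp.ext
    funext n
    cases n <;> simp [shiftFun, lp.coeFn_smul, Pi.smul_apply]
  norm_map' f := by
    have hp : 0 < (2 : ℝ≥0∞).toReal := by norm_num
    rw [lp.norm_eq_tsum_rpow hp, lp.norm_eq_tsum_rpow hp]
    congr 1
    have hs : Summable fun n => ‖shiftFun f n‖ ^ (2 : ℝ≥0∞).toReal :=
      summable_shift ((lp.memℓp f).summable hp)
    have h0 := hs.tsum_eq_zero_add
    simpa [shiftFun, Real.zero_rpow (by norm_num : (2 : ℝ≥0∞).toReal ≠ 0)] using h0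

@[simp] lemma shiftL_apply_zero (f : E) : (shiftL f : ℕ → ℝ) 0 = 0 := rfl
@[simp] lemma shiftL_apply_succ (f : E) (n : ℕ) : (shiftL f : ℕ → ℝ) (n + 1) = f n := rfl

/-- Normalization of a nonvanishing map, as a map into the unit sphere. -/
def nmap {X : Type*} [TopologicalSpace X] {F : Type*} [NormedAddCommGroup F]
    [NormedSpace ℝ F] (f : C(X, F)) (hf : ∀ x, f x ≠ 0) :
    C(X, sphere (0 : F) 1) where
  toFun x := ⟨‖f x‖⁻¹ • f x, by
    rw [mem_sphere_zero_iff_norm, norm_smul, norm_inv, norm_norm]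
    exact inv_mul_cancel₀ (norm_ne_zero_iff.mpr (hf x))⟩
  continuous_toFun := by
    apply Continuous.subtype_mk
    exact ((f.continuous.norm).inv₀ fun x => norm_ne_zero_iff.mpr (hf x)).smul f.continuous

lemma nmap_homotopic {X : Type*} [TopologicalSpace X] {F : Type*} [NormedAddCommGroup F]
    [NormedSpace ℝ F] (f g : C(X, F))
    (h : ∀ (t : unitInterval) (x : X), (1 - (t : ℝ)) • f x + (t : ℝ) • g x ≠ 0)
    (hf : ∀ x, f x ≠ 0) (hg : ∀ x, g x ≠ 0) :
    (nmap f hf).Homotopic (nmap g hg) := by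
  refine ⟨⟨⟨fun p => ⟨‖(1 - (p.1 : ℝ)) • f p.2 + (p.1 : ℝ) • g p.2‖⁻¹ •
      ((1 - (p.1 : ℝ)) • f p.2 + (p.1 : ℝ) • g p.2), ?_⟩, ?_⟩, ?_, ?_⟩⟩
  · rw [mem_sphere_zero_iff_norm, norm_smul, norm_inv, norm_norm]
    exact inv_mul_cancel₀ (norm_ne_zero_iff.mpr (h _ _))
  · apply Continuous.subtype_mk
    have hc : Continuous fun p : unitInterval × X =>
        (1 - (p.1 : ℝ)) • f p.2 + (p.1 : ℝ) • g p.2 := by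
      apply Continuous.add
      · exact (continuous_const.sub (continuous_subtype_val.comp continuous_fst)).smul
          (f.continuous.comp continuous_snd)
      · exact (continuous_subtype_val.comp continuous_fst).smul
          (g.continuous.comp continuous_snd)
    exact ((hc.norm).inv₀ fun p => norm_ne_zero_iff.mpr (h p.1 p.2)).smul hc
  · intro x
    apply Subtype.ext
    simp [nmap]
  · intro x
    apply Subtype.ext
    simp [nmap]

lemma lp_apply_comb (a b : ℝ) (u v : E) (n : ℕ) :
    ((a • u + b • v : E) : ℕ → ℝ) n = a * u n + b * v n := by
  simp [lp.coeFn_add, lp.coeFn_smul, Pi.add_apply, Pi.smul_apply]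
  rfl

/-- The infinite-dimensional sphere `S^∞`, the unit sphere of the real Hilbert space
`ℓ²(ℕ, ℝ)`, is contractible. -/
theorem stmt_13 :
    ContractibleSpace (Metric.sphere (0 : lp (fun _ : ℕ => ℝ) 2) 1) := by
  rw [contractible_iff_id_nullhomotopic]
  set e0 : E := lp.single 2 0 (1 : ℝ) with he0
  have he00 : (e0 : ℕ → ℝ) 0 = 1 := by
    rw [he0]; exact lp.single_apply_self _ _ _
  have he0ne : e0 ≠ 0 := by
    intro h
    have := he00
    rw [h] at this
    simp [lp.coeFn_zero] at this
  -- maps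
  set S := Metric.sphere (0 : E) 1
  have hSne : ∀ x : S, (x : E) ≠ 0 := by
    intro x hx
    have := x.2
    rw [mem_sphere_zero_iff_norm] at this
    rw [hx] at this
    simp at this
  let incl : C(S, E) := ⟨fun x => (x : E), continuous_subtype_val⟩
  let Tmap : C(S, E) := ⟨fun x => shiftL (x : E),
    shiftL.continuous.comp continuous_subtype_val⟩
  let cmap : C(S, E) := ContinuousMap.const S e0
  have hTne : ∀ x : S, Tmap x ≠ 0 := by
    intro x hx
    apply hSne x
    have h : ‖(Tmap x : E)‖ = 0 := by rw [hx]; simp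
    rw [show ((Tmap x : E)) = shiftL (x : E) from rfl, shiftL.norm_map] at h
    exact norm_eq_zero.mp h
  have hcne : ∀ x : S, cmap x ≠ 0 := fun _ => he0ne
  -- segment between x and shift x never vanishes
  have hseg1 : ∀ (t : unitInterval) (x : S),
      (1 - (t : ℝ)) • incl x + (t : ℝ) • Tmap x ≠ 0 := by
    intro t x hx
    apply hSne x
    apply lp.ext
    funext n
    have key : ∀ n : ℕ, ((1 - (t : ℝ)) • incl x + (t : ℝ) • Tmap x : E) n = 0 := by
      intro n; rw [hx]; simp [lp.coeFn_zero]
    have h0 := key 0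
    rw [lp_apply_comb] at h0
    simp only [incl, Tmap, ContinuousMap.coe_mk, shiftL_apply_zero, mul_zero, add_zero] at h0
    by_cases ht : (t : ℝ) = 1
    · -- then x n = 0 for all n from succ equations
      have hz : ∀ n, ((x : E) : ℕ → ℝ) n = 0 := by
        intro n
        have hs := key (n + 1)
        rw [lp_apply_comb] at hs
        simp only [incl, Tmap, ContinuousMap.coe_mk, shiftL_apply_succ, ht, sub_self, zero_mul, zero_add, one_mul] at hs
        exact hs
      simpa using hz n
    · have h1t : (1 : ℝ) - (t : ℝ) ≠ 0 := sub_ne_zero.mpr (Ne.symm ht)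
      have hx0 : ((x : E) : ℕ → ℝ) 0 = 0 := by
        rcases mul_eq_zero.mp h0 with h | h
        · exact absurd h h1t
        · exact h
      have hz : ∀ n, ((x : E) : ℕ → ℝ) n = 0 := by
        intro n
        induction n with
        | zero => exact hx0
        | succ m ih =>
          have hs := key (m + 1)
          rw [lp_apply_comb] at hs
          simp only [incl, Tmap, ContinuousMap.coe_mk, shiftL_apply_succ, ih, mul_zero, add_zero] at hs
          rcases mul_eq_zero.mp hs with h | h
          · exact absurd h h1t
          · exact h
      simpa using hz n
  -- segment between shift x and e0 never vanishes
  have hseg2 : ∀ (t : unitInterval) (x : S),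
      (1 - (t : ℝ)) • Tmap x + (t : ℝ) • cmap x ≠ 0 := by
    intro t x hx
    by_cases ht : (t : ℝ) = 0
    · have : (1 - (t : ℝ)) • Tmap x + (t : ℝ) • cmap x = Tmap x := by
        rw [ht]; simp
      rw [this] at hx
      exact hTne x hx
    · have h0 : ((1 - (t : ℝ)) • Tmap x + (t : ℝ) • cmap x : E) 0 = 0 := by
        rw [hx]; simp [lp.coeFn_zero]
      rw [lp_apply_comb] at h0
      simp only [Tmap, ContinuousMap.coe_mk, shiftL_apply_zero, mul_zero, zero_add] at h0
      have : ((cmap x : E) : ℕ → ℝ) 0 = 1 := he00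
      rw [this, mul_one] at h0
      exact ht h0
  have hinclne : ∀ x : S, incl x ≠ 0 := hSne
  -- nmap incl = id
  have hid : nmap incl hinclne = ContinuousMap.id S := by
    apply ContinuousMap.ext; intro x
    apply Subtype.ext
    show (‖incl x‖⁻¹ • incl x : E) = (x : E)
    have : ‖(x : E)‖ = 1 := mem_sphere_zero_iff_norm.mp x.2
    simp [incl, this]
  have H1 : (nmap incl hinclne).Homotopic (nmap Tmap hTne) :=
    nmap_homotopic incl Tmap hseg1 hinclne hTne
  have H2 : (nmap Tmap hTne).Homotopic (nmap cmap hcne) :=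
    nmap_homotopic Tmap cmap hseg2 hTne hcne
  have hmem : ‖e0‖⁻¹ • e0 ∈ S := by
    rw [show S = Metric.sphere (0 : E) 1 from rfl, mem_sphere_zero_iff_norm,
      norm_smul, norm_inv, norm_norm]
    exact inv_mul_cancel₀ (norm_ne_zero_iff.mpr he0ne)
  refine ⟨⟨‖e0‖⁻¹ • e0, hmem⟩, ?_⟩
  have hconst : nmap cmap hcne = ContinuousMap.const S ⟨‖e0‖⁻¹ • e0, hmem⟩ := by
    ext x; rfl
  rw [← hid, ← hconst]
  exact H1.trans H2

end
end
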